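/- Let J ∈ ℝ. There exists a 2π-periodic function h : ℝ → ℝ of class C³ with h(θ) > 0 for all θ satisfying h(θ)²/2 + h(θ)³·(h'(θ) + h'''(θ)) = J for all θ if and only if J > 0. Moreover, for any J > 0 the constant function h(θ) = √(2J) is such a solution. -/

import Mathlib

open Real

lemma per_deriv (f : ℝ → ℝ) (T : ℝ) (hp : Function.Periodic f T) :
    Function.Periodic (deriv f) T := by
  intro x
  have hf : (fun y => f (y + T)) = f := funext hp
  rw [← deriv_comp_add_const, hf]

lemma aux_crit (h : ℝ → ℝ) (hp : Function.Periodic h (2 * π)) (hc : ContDiff ℝ 3 h) :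
    ∃ c, deriv h c + iteratedDeriv 3 h c = 0 := by
  set u : ℝ → ℝ := fun x => h x + iteratedDeriv 2 h x with hu
  have hch : ContDiff ℝ 1 h := hc.of_le (by norm_num)
  have hc2 : ContDiff ℝ 1 (iteratedDeriv 2 h) := by
    have := hc.iterate_deriv' 1 2
    simpa [iteratedDeriv_eq_iterate] using this
  have hud : Differentiable ℝ u :=
    (hch.differentiable one_ne_zero).add (hc2.differentiable one_ne_zero)
  have hper2 : Function.Periodic (iteratedDeriv 2 h) (2 * π) := by
    simpa [iteratedDeriv_succ, iteratedDeriv_zero] using per_deriv _ _ (per_deriv _ _ hp)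
  have huab : u 0 = u (2 * π) := by
    have h1 : h (0 + 2 * π) = h 0 := hp 0
    have h2 : iteratedDeriv 2 h (0 + 2 * π) = iteratedDeriv 2 h 0 := hper2 0
    simp only [zero_add] at h1 h2
    simp [hu, h1, h2]
  have h2pi : (0 : ℝ) < 2 * π := by positivity
  obtain ⟨c, _, hc0⟩ := exists_deriv_eq_zero h2pi hud.continuous.continuousOn huab
  refine ⟨c, ?_⟩
  have hdu : deriv u c = deriv h c + deriv (iteratedDeriv 2 h) c := by
    rw [hu]
    exact deriv_add ((hch.differentiable one_ne_zero) c) ((hc2.differentiable one_ne_zero) c)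
  rw [← iteratedDeriv_succ] at hdu
  rw [← hdu]; exact hc0

theorem stmt_2 (J : ℝ) :
    ((∃ h : ℝ → ℝ, Function.Periodic h (2 * π) ∧ ContDiff ℝ 3 h ∧
        (∀ θ, 0 < h θ) ∧
        (∀ θ, (h θ) ^ 2 / 2 + (h θ) ^ 3 * (deriv h θ + iteratedDeriv 3 h θ) = J))
      ↔ 0 < J)
    ∧ (0 < J →
        (Function.Periodic (fun _ : ℝ => Real.sqrt (2 * J)) (2 * π) ∧
         ContDiff ℝ 3 (fun _ : ℝ => Real.sqrt (2 * J)) ∧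
         (∀ θ : ℝ, 0 < (fun _ : ℝ => Real.sqrt (2 * J)) θ) ∧
         (∀ θ : ℝ, ((fun _ : ℝ => Real.sqrt (2 * J)) θ) ^ 2 / 2
            + ((fun _ : ℝ => Real.sqrt (2 * J)) θ) ^ 3 *
              (deriv (fun _ : ℝ => Real.sqrt (2 * J)) θ
                + iteratedDeriv 3 (fun _ : ℝ => Real.sqrt (2 * J)) θ) = J))) := by
  have main : ∀ J : ℝ, 0 < J →
      (Function.Periodic (fun _ : ℝ => Real.sqrt (2 * J)) (2 * π) ∧
       ContDiff ℝ 3 (fun _ : ℝ => Real.sqrt (2 * J)) ∧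
       (∀ θ : ℝ, 0 < (fun _ : ℝ => Real.sqrt (2 * J)) θ) ∧
       (∀ θ : ℝ, ((fun _ : ℝ => Real.sqrt (2 * J)) θ) ^ 2 / 2
          + ((fun _ : ℝ => Real.sqrt (2 * J)) θ) ^ 3 *
            (deriv (fun _ : ℝ => Real.sqrt (2 * J)) θ
              + iteratedDeriv 3 (fun _ : ℝ => Real.sqrt (2 * J)) θ) = J)) := by
    intro J hJ
    have hpos : 0 < Real.sqrt (2 * J) := Real.sqrt_pos.mpr (by linarith)
    refine ⟨fun x => rfl, contDiff_const, fun θ => hpos, fun θ => ?_⟩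
    have hd : deriv (fun _ : ℝ => Real.sqrt (2 * J)) θ = 0 := deriv_const θ _
    have hd3 : iteratedDeriv 3 (fun _ : ℝ => Real.sqrt (2 * J)) θ = 0 := by
      simp [iteratedDeriv_succ, iteratedDeriv_zero]
    simp only [hd, hd3]
    rw [Real.sq_sqrt (by linarith : (0:ℝ) ≤ 2 * J)]
    ring
  constructor
  · constructor
    · rintro ⟨h, hp, hc, hpos, heq⟩
      obtain ⟨c, hc0⟩ := aux_crit h hp hc
      have := heq c
      rw [hc0, mul_zero, add_zero] at this
      have := hpos c
      nlinarith [sq_nonneg (h c)]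
    · intro hJ
      exact ⟨_, main J hJ⟩
  · exact main J
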